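/- Consider the instance where G is the path (v_1, v_2, …, v_{10}) and there are four agents a_1, a_2, a_3, b with binary additive valuations: each of a_1, a_2, a_3 approves exactly the items v_1, v_2, v_3, v_4, v_7, v_8, v_9, v_{10}, and b approves exactly the items v_5, v_6. Then no connected allocation of this instance is both Pareto-optimal and EF1. -/

import Mathlib

open Finset

/-- A finite set of items is *connected* in the item graph `G` if the induced
subgraph is preconnected (the empty set counts as connected). -/
def ConnSet {V : Type*} (G : SimpleGraph V) (X : Finset V) : Prop :=
  (G.induce (X : Set V)).Preconnected

/-- `π` is a connected allocation of the items in `R` among the agents in `N`. -/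
def IsConnAllocOn {V N : Type*} [DecidableEq V] (G : SimpleGraph V)
    (R : Finset V) (π : N → Finset V) : Prop :=
  (∀ i, π i ⊆ R) ∧ (∀ i, ConnSet G (π i)) ∧
    (∀ i j, i ≠ j → Disjoint (π i) (π j)) ∧ (∀ v ∈ R, ∃ i, v ∈ π i)

/-- `π` is a connected allocation of all items among the agents in `N`. -/
def IsConnAlloc {V N : Type*} [Fintype V] [DecidableEq V] (G : SimpleGraph V)
    (π : N → Finset V) : Prop :=
  IsConnAllocOn G Finset.univ π

/-- `π'` is a Pareto-improvement of `π`. -/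
def ParetoImproves {V N : Type*} (u : N → Finset V → ℝ)
    (π' π : N → Finset V) : Prop :=
  (∀ i, u i (π i) ≤ u i (π' i)) ∧ ∃ i, u i (π i) < u i (π' i)

/-- `π` is Pareto-optimal: no connected allocation Pareto-improves it. -/
def ParetoOptimal {V N : Type*} [Fintype V] [DecidableEq V] (G : SimpleGraph V)
    (u : N → Finset V → ℝ) (π : N → Finset V) : Prop :=
  ∀ π', IsConnAlloc G π' → ¬ ParetoImproves u π' π

/-- `π` satisfies EF1: any envy can be removed by deleting a single item
(keeping the envied bundle connected). -/
def EF1 {V N : Type*} [Fintype V] [DecidableEq V] (G : SimpleGraph V)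
    (u : N → Finset V → ℝ) (π : N → Finset V) : Prop :=
  ∀ i j, u i (π j) ≤ u i (π i) ∨
    ∃ v ∈ π j, ConnSet G ((π j).erase v) ∧ u i ((π j).erase v) ≤ u i (π i)

/-- The maximin fair share of an agent with valuation `u`, when the items are
divided into `|N|` connected bundles. -/
noncomputable def mmsVal {V : Type*} (N : Type*) [Fintype V] [DecidableEq V]
    (G : SimpleGraph V) (u : Finset V → ℝ) : ℝ :=
  sSup {x : ℝ | ∃ P : N → Finset V, IsConnAlloc G P ∧
    x = sInf (Set.range fun j => u (P j))}

/-- `π` is an MMS allocation: every agent gets at least her maximin fair share. -/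
def IsMMS {V N : Type*} [Fintype V] [DecidableEq V] (G : SimpleGraph V)
    (u : N → Finset V → ℝ) (π : N → Finset V) : Prop :=
  ∀ i, mmsVal N G (u i) ≤ u i (π i)

/-- On the path `(v_1,…,v_10)` (encoded as `Fin 10`), with agents
`a_1,a_2,a_3` (`Sum.inl`) approving `v_1,v_2,v_3,v_4,v_7,v_8,v_9,v_10` and
agent `b` (`Sum.inr`) approving `v_5,v_6`, no connected allocation is both
Pareto-optimal and EF1. -/
def Itv (X : Finset (Fin 10)) : Prop :=
  ∀ a ∈ X, ∀ b ∈ X, ∀ c : Fin 10, a ≤ c → c ≤ b → c ∈ X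

lemma itv_connSet {X : Finset (Fin 10)} (h : Itv X) :
    ConnSet (SimpleGraph.pathGraph 10) X := by
  intro u v
  suffices H : ∀ n : ℕ, ∀ u v : (X : Set (Fin 10)),
      (v : Fin 10).val = (u : Fin 10).val + n →
      ((SimpleGraph.pathGraph 10).induce (X : Set (Fin 10))).Reachable u v by
    rcases le_total (u : Fin 10).val (v : Fin 10).val with h' | h'
    · exact H ((v : Fin 10).val - (u : Fin 10).val) u v (by omega)
    · exact (H ((u : Fin 10).val - (v : Fin 10).val) v u (by omega)).symm
  intro n
  induction n with
  | zero =>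
    intro u v h'
    have : u = v := Subtype.ext (Fin.ext (by omega))
    rw [this]
  | succ n ih =>
    intro u v h'
    have hv9 : (u : Fin 10).val + 1 ≤ 9 := by
      have := (v : Fin 10).isLt; omega
    have hmX : (⟨(u : Fin 10).val + 1, by omega⟩ : Fin 10) ∈ X := by
      refine h (u : Fin 10) (by exact_mod_cast u.2) (v : Fin 10) (by exact_mod_cast v.2) _ ?_ ?_
      · exact Fin.le_def.mpr (by simp)
      · exact Fin.le_def.mpr (by show (u : Fin 10).val + 1 ≤ (v : Fin 10).val; omega)
    have hadj : ((SimpleGraph.pathGraph 10).induce (X : Set (Fin 10))).Adj u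
        ⟨⟨(u : Fin 10).val + 1, by omega⟩, hmX⟩ := by
      simp only [SimpleGraph.comap_adj, SimpleGraph.pathGraph_adj,
        Function.Embedding.coe_subtype]
      exact Or.inl trivial
    exact hadj.reachable.trans (ih _ v (by simp; omega))

lemma connSet_itv {X : Finset (Fin 10)} (h : ConnSet (SimpleGraph.pathGraph 10) X) :
    Itv X := by
  intro a ha b hb c h1 h2
  by_contra hc
  obtain ⟨p⟩ := h ⟨a, by exact_mod_cast ha⟩ ⟨b, by exact_mod_cast hb⟩
  have key : ∀ (u v : (X : Set (Fin 10)))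
      (_ : ((SimpleGraph.pathGraph 10).induce (X : Set (Fin 10))).Walk u v),
      (u : Fin 10).val < c.val → (v : Fin 10).val < c.val := by
    intro u v p
    induction p with
    | nil => exact id
    | @cons u w v hadj p ih =>
      intro hu
      apply ih
      have hw' : (w : Fin 10).val ≠ c.val := by
        intro hh
        exact hc (by rw [← Fin.ext hh]; exact_mod_cast w.2)
      simp only [SimpleGraph.comap_adj, SimpleGraph.pathGraph_adj,
        Function.Embedding.coe_subtype] at hadj
      omega
  have hac : a.val < c.val := by
    have hne : a.val ≠ c.val := fun hh => hc (Fin.ext hh ▸ ha)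
    have := Fin.le_def.mp h1
    omega
  have hb' := key _ _ p hac
  have := Fin.le_def.mp h2
  simp only at hb'
  omega

lemma itv_union {X Y : Finset (Fin 10)} {p q : Fin 10} (hX : Itv X) (hY : Itv Y)
    (hp : p ∈ X) (hXub : ∀ x ∈ X, x ≤ p) (hq : q ∈ Y) (hYlb : ∀ y ∈ Y, q ≤ y)
    (hpq : p.val + 1 = q.val) : Itv (X ∪ Y) := by
  intro a ha b hb c h1 h2
  simp only [mem_union] at ha hb ⊢
  rcases ha with ha | ha <;> rcases hb with hb | hb
  · exact Or.inl (hX a ha b hb c h1 h2)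
  · by_cases hcp : c ≤ p
    · exact Or.inl (hX a ha p hp c h1 hcp)
    · refine Or.inr (hY q hq b hb c ?_ h2)
      have := Fin.le_def.mp (hXub a ha)
      have h1' := Fin.le_def.mp h1
      have : ¬ c.val ≤ p.val := fun hh => hcp (Fin.le_def.mpr hh)
      exact Fin.le_def.mpr (by omega)
  · exfalso
    have := Fin.le_def.mp (hYlb a ha)
    have := Fin.le_def.mp (hXub b hb)
    have := Fin.le_def.mp h1
    have := Fin.le_def.mp h2
    omega
  · exact Or.inr (hY a ha b hb c h1 h2)

lemma itv_erase {X : Finset (Fin 10)} {v w : Fin 10} (hX : Itv X) (hw : w ∉ X)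
    (hvw : v.val + 1 = w.val ∨ w.val + 1 = v.val) : Itv (X.erase v) := by
  intro a ha b hb c h1 h2
  rw [mem_erase] at ha hb ⊢
  obtain ⟨hav, ha⟩ := ha
  obtain ⟨hbv, hb⟩ := hb
  have hcX : c ∈ X := hX a ha b hb c h1 h2
  refine ⟨?_, hcX⟩
  intro hcv
  subst hcv
  have h1' := Fin.le_def.mp h1
  have h2' := Fin.le_def.mp h2
  have hav' : a.val ≠ c.val := fun hh => hav (Fin.ext hh)
  have hbv' : b.val ≠ c.val := fun hh => hbv (Fin.ext hh)
  rcases hvw with hvw | hvw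
  · exact hw (hX a ha b hb w (Fin.le_def.mpr (by omega)) (Fin.le_def.mpr (by omega)))
  · exact hw (hX a ha b hb w (Fin.le_def.mpr (by omega)) (Fin.le_def.mpr (by omega)))

lemma itv_of_eq_of_not_mem {X : Finset (Fin 10)} {v : Fin 10} (hX : Itv X) (hv : v ∉ X) :
    Itv (X.erase v) := by
  rw [Finset.erase_eq_of_notMem hv]; exact hX

lemma itv_filter_le {X : Finset (Fin 10)} (hX : Itv X) (t : Fin 10) :
    Itv (X.filter (· ≤ t)) := by
  intro a ha b hb c h1 h2
  rw [mem_filter] at ha hb ⊢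
  exact ⟨hX a ha.1 b hb.1 c h1 h2, le_trans h2 hb.2⟩

lemma itv_filter_ge {X : Finset (Fin 10)} (hX : Itv X) (t : Fin 10) :
    Itv (X.filter (t ≤ ·)) := by
  intro a ha b hb c h1 h2
  rw [mem_filter] at ha hb ⊢
  exact ⟨hX a ha.1 b hb.1 c h1 h2, le_trans ha.2 h1⟩


abbrev NN := Fin 3 ⊕ Unit
abbrev bA : NN := Sum.inr ()

section main

variable {A : NN → Finset (Fin 10)}
  {u : NN → Finset (Fin 10) → ℝ}
  {π : NN → Finset (Fin 10)}

lemma u_mono' (hu : ∀ i X, u i X = ((X ∩ A i).card : ℝ)) {i : NN} {X Y : Finset (Fin 10)}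
    (h : (X ∩ A i).card ≤ (Y ∩ A i).card) : u i X ≤ u i Y := by
  rw [hu, hu]; exact_mod_cast h

lemma u_strict' (hu : ∀ i X, u i X = ((X ∩ A i).card : ℝ)) {i : NN} {X Y : Finset (Fin 10)}
    (h : (X ∩ A i).card < (Y ∩ A i).card) : u i X < u i Y := by
  rw [hu, hu]; exact_mod_cast h

lemma mk_alloc' {π' : NN → Finset (Fin 10)} (hconn : ∀ i, Itv (π' i))
    (hdisj : ∀ i j, i ≠ j → Disjoint (π' i) (π' j))
    (hcover : ∀ v, ∃ i, v ∈ π' i) :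
    IsConnAlloc (SimpleGraph.pathGraph 10) π' :=
  ⟨fun _ => subset_univ _, fun i => itv_connSet (hconn i), hdisj, fun v _ => hcover v⟩

/-- Step A: if b owns x ∈ {4,5} but not the adjacent y ∈ {4,5}, move y to b. -/
lemma stepA
    (hA1 : ∀ t, A (Sum.inl t) = ({0,1,2,3,6,7,8,9} : Finset (Fin 10)))
    (hA2 : A bA = ({4,5} : Finset (Fin 10)))
    (hu : ∀ i X, u i X = ((X ∩ A i).card : ℝ))
    (hitv : ∀ i, Itv (π i))
    (hdisj : ∀ i j, i ≠ j → Disjoint (π i) (π j))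
    (hcover : ∀ v, ∃ i, v ∈ π i)
    {x y : Fin 10} (hxA : x ∈ ({4,5} : Finset (Fin 10)))
    (hyA : y ∈ ({4,5} : Finset (Fin 10)))
    (hxy : x.val + 1 = y.val ∨ y.val + 1 = x.val)
    (hx : x ∈ π bA) (hy : y ∉ π bA) :
    ∃ π', IsConnAlloc (SimpleGraph.pathGraph 10) π' ∧ ParetoImproves u π' π := by
  classical
  refine ⟨fun i => if i = bA then π bA ∪ {y} else (π i).erase y, ?_, ?_⟩
  · refine mk_alloc' ?_ ?_ ?_
    · intro i
      by_cases hib : i = bA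
      · simp only [hib, if_pos rfl]
        have hyItv : Itv ({y} : Finset (Fin 10)) := by
          intro a ha b hb c h1 h2
          simp only [mem_singleton] at *
          subst ha; subst hb; exact Fin.le_antisymm h2 h1
        rcases hxy with hxy | hxy
        · -- x < y : B all ≤ x
          have hub : ∀ z ∈ π bA, z ≤ x := by
            intro z hz
            by_contra hzx
            have h1 : ¬ z.val ≤ x.val := fun hh => hzx (Fin.le_def.mpr hh)
            have h2 : x.val ≤ y.val := by omega
            have h3 : y.val ≤ z.val := by omega
            exact hy (hitv bA x hx z hz y (Fin.le_def.mpr h2) (Fin.le_def.mpr h3))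
          exact itv_union (hitv bA) hyItv hx hub (mem_singleton_self y)
            (fun z hz => le_of_eq (mem_singleton.mp hz).symm) hxy
        · -- y < x : B all ≥ x
          rw [union_comm]
          have hlb : ∀ z ∈ π bA, x ≤ z := by
            intro z hz
            by_contra hxz
            have h1 : ¬ x.val ≤ z.val := fun hh => hxz (Fin.le_def.mpr hh)
            have h2 : z.val ≤ y.val := by omega
            have h3 : y.val ≤ x.val := by omega
            exact hy (hitv bA z hz x hx y (Fin.le_def.mpr h2) (Fin.le_def.mpr h3))
          exact itv_union hyItv (hitv bA) (mem_singleton_self y)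
            (fun z hz => le_of_eq (mem_singleton.mp hz)) hx hlb hxy
      · simp only [if_neg hib]
        refine itv_erase (hitv i) (w := x) ?_ hxy.symm
        exact fun hxi => (disjoint_left.mp (hdisj i bA hib) hxi) hx
    · intro i j hij
      by_cases hib : i = bA <;> by_cases hjb : j = bA
      · exact absurd (hib.trans hjb.symm) hij
      · subst hib
        simp only [if_pos rfl, if_neg hjb]
        rw [disjoint_left]
        intro z hz hz'
        rcases mem_union.mp hz with hz | hz
        · exact disjoint_left.mp (hdisj bA j (fun h => hjb h.symm)) hz (mem_of_mem_erase hz')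
        · exact (mem_erase.mp hz').1 (mem_singleton.mp hz) |>.elim
      · subst hjb
        simp only [if_pos rfl, if_neg hib]
        rw [disjoint_left]
        intro z hz hz'
        rcases mem_union.mp hz' with hz' | hz'
        · exact disjoint_left.mp (hdisj i bA hib) (mem_of_mem_erase hz) hz'
        · exact (mem_erase.mp hz).1 (mem_singleton.mp hz') |>.elim
      · simp only [if_neg hib, if_neg hjb]
        exact (hdisj i j hij).mono (erase_subset _ _) (erase_subset _ _)
    · intro v
      by_cases hv : v = y
      · exact ⟨bA, by simp [hv]⟩
      · obtain ⟨i, hi⟩ := hcover v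
        by_cases hib : i = bA
        · exact ⟨bA, by simp [hib ▸ hi]⟩
        · exact ⟨i, by simp only [if_neg hib]; exact mem_erase.mpr ⟨hv, hi⟩⟩
  · constructor
    · intro i
      by_cases hib : i = bA
      · subst hib
        simp only [if_pos rfl]
        exact u_mono' hu (card_le_card (inter_subset_inter subset_union_left (Finset.Subset.refl _)))
      · simp only [if_neg hib]
        refine u_mono' hu (le_of_eq ?_)
        congr 1
        ext z
        simp only [mem_inter, mem_erase]
        constructor
        · intro ⟨h1, h2⟩
          refine ⟨⟨?_, h1⟩, h2⟩
          rintro rfl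
          rcases i with t | ⟨⟩
          · rw [hA1 t] at h2; revert h2
            rcases mem_insert.mp hyA with h | h
            · subst h; decide
            · rw [mem_singleton.mp h]; decide
          · exact hib rfl
        · exact fun ⟨h1, h2⟩ => ⟨h1.2, h2⟩
    · refine ⟨bA, ?_⟩
      simp only [if_pos rfl]
      refine u_strict' hu ?_
      refine card_lt_card ⟨inter_subset_inter subset_union_left (Finset.Subset.refl _), fun hsub => ?_⟩
      have hy' : y ∈ (π bA ∪ {y}) ∩ A bA := by
        rw [hA2]; exact mem_inter.mpr ⟨mem_union_right _ (mem_singleton_self y), hyA⟩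
      exact hy (mem_inter.mp (hsub hy')).1


lemma itv_erase4 {X : Finset (Fin 10)} (hX : Itv X) (h : 5 ∉ X ∨ 4 ∉ X) :
    Itv (X.erase 4) := by
  rcases h with h | h
  · exact itv_erase hX (w := 5) h (Or.inl (by decide))
  · rw [Finset.erase_eq_of_notMem h]; exact hX

lemma erase_inter_of_not_mem' {X S : Finset (Fin 10)} {v : Fin 10} (h : v ∉ S) :
    X.erase v ∩ S = X ∩ S := by
  ext x
  simp only [mem_inter, mem_erase]
  constructor
  · exact fun ⟨⟨_, hx⟩, hs⟩ => ⟨hx, hs⟩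
  · exact fun ⟨hx, hs⟩ => ⟨⟨fun e => h (e ▸ hs), hx⟩, hs⟩

lemma owner_unique' (hdisj : ∀ i j : NN, i ≠ j → Disjoint (π i) (π j))
    {v : Fin 10} {i j : NN} (hi : v ∈ π i) (hj : v ∈ π j) : i = j := by
  by_contra h
  exact disjoint_left.mp (hdisj i j h) hi hj

/-- find an agent `w ≠ b` whose bundle can absorb `π b` (adjacency), when 4 ∉ π b. -/
lemma absorb (hitv : ∀ i, Itv (π i))
    (hdisj : ∀ i j, i ≠ j → Disjoint (π i) (π j))
    (hcover : ∀ v, ∃ i, v ∈ π i)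
    (h4 : (4 : Fin 10) ∉ π bA) :
    ∃ w, w ≠ bA ∧ Itv (π w ∪ π bA) := by
  classical
  by_cases hBe : π bA = ∅
  · exact ⟨Sum.inl 0, by simp, by rw [hBe, union_empty]; exact hitv _⟩
  have hne : (π bA).Nonempty := nonempty_iff_ne_empty.mpr hBe
  by_cases h0 : (0 : Fin 10) ∈ π bA
  · -- B contains 0, so 9 ∉ B; absorb on the right of max
    have h9 : (9 : Fin 10) ∉ π bA := fun h9 =>
      h4 (hitv bA 0 h0 9 h9 4 (by decide) (by decide))
    set M := (π bA).max' hne with hMdef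
    have hM : M ∈ π bA := (π bA).max'_mem hne
    have hM9 : M.val < 9 := by
      have : M.val ≤ 9 := by omega
      rcases Nat.lt_or_ge M.val 9 with h | h
      · exact h
      · exfalso; apply h9
        have : M = (9 : Fin 10) := Fin.ext (by omega)
        exact this ▸ hM
    set t : Fin 10 := ⟨M.val + 1, by omega⟩ with htdef
    have ht : t ∉ π bA := by
      intro h
      have h' := Fin.le_def.mp ((π bA).le_max' t h)
      have h'' : t.val = M.val + 1 := rfl
      omega
    obtain ⟨w, hw⟩ := hcover t
    have hwb : w ≠ bA := fun e => ht (e ▸ hw)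
    refine ⟨w, hwb, ?_⟩
    rw [union_comm]
    refine itv_union (hitv bA) (hitv w) hM (fun z hz => (π bA).le_max' z hz) hw ?_ rfl
    intro z hz
    by_contra htz
    have h1 : ¬ t.val ≤ z.val := fun hh => htz (Fin.le_def.mpr hh)
    have h'' : t.val = M.val + 1 := rfl
    have h2 : z.val ≤ M.val := by omega
    have hMw : M ∈ π w := hitv w z hz t hw M (Fin.le_def.mpr h2)
      (Fin.le_def.mpr (by omega))
    exact disjoint_left.mp (hdisj w bA hwb) hMw hM
  · -- 0 ∉ B; absorb on the left of min
    set m := (π bA).min' hne with hmdef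
    have hm : m ∈ π bA := (π bA).min'_mem hne
    have hm0 : 0 < m.val := by
      rcases Nat.eq_zero_or_pos m.val with h | h
      · exfalso; apply h0
        have : m = (0 : Fin 10) := Fin.ext h
        exact this ▸ hm
      · exact h
    set t : Fin 10 := ⟨m.val - 1, by omega⟩ with htdef
    have ht : t ∉ π bA := by
      intro h
      have h' := Fin.le_def.mp ((π bA).min'_le t h)
      have h'' : t.val = m.val - 1 := rfl
      omega
    obtain ⟨w, hw⟩ := hcover t
    have hwb : w ≠ bA := fun e => ht (e ▸ hw)
    refine ⟨w, hwb, ?_⟩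
    have h'' : t.val = m.val - 1 := rfl
    refine itv_union (hitv w) (hitv bA) hw ?_ hm (fun z hz => (π bA).min'_le z hz)
      (by omega)
    intro z hz
    by_contra hzt
    have h1 : ¬ z.val ≤ t.val := fun hh => hzt (Fin.le_def.mpr hh)
    have h2 : m.val ≤ z.val := by omega
    have hmw : m ∈ π w := hitv w t hw z hz m (Fin.le_def.mpr (by omega)) (Fin.le_def.mpr h2)
    exact disjoint_left.mp (hdisj w bA hwb) hmw hm

/-- Step B improvement: neither 4 nor 5 in b's bundle, owned by distinct agents. -/
lemma stepB
    (hA1 : ∀ t, A (Sum.inl t) = ({0,1,2,3,6,7,8,9} : Finset (Fin 10)))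
    (hA2 : A bA = ({4,5} : Finset (Fin 10)))
    (hu : ∀ i X, u i X = ((X ∩ A i).card : ℝ))
    (hitv : ∀ i, Itv (π i))
    (hdisj : ∀ i j, i ≠ j → Disjoint (π i) (π j))
    (hcover : ∀ v, ∃ i, v ∈ π i)
    {c d : NN} (hc : (4 : Fin 10) ∈ π c) (hd : (5 : Fin 10) ∈ π d) (hcd : c ≠ d)
    (h4 : (4 : Fin 10) ∉ π bA) (h5 : (5 : Fin 10) ∉ π bA) :
    ∃ π', IsConnAlloc (SimpleGraph.pathGraph 10) π' ∧ ParetoImproves u π' π := by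
  classical
  obtain ⟨w, hwb, hwu⟩ := absorb hitv hdisj hcover h4
  have not4Aa : ∀ i : NN, i ≠ bA → (4 : Fin 10) ∉ A i := by
    rintro (t | ⟨⟩) hi
    · rw [hA1 t]; decide
    · exact absurd rfl hi
  refine ⟨fun i => if i = bA then {4} else if i = w then (π w ∪ π bA).erase 4
    else (π i).erase 4, ?_, ?_⟩
  · refine mk_alloc' ?_ ?_ ?_
    · intro i
      by_cases hib : i = bA
      · simp only [if_pos hib]; unfold Itv; decide
      · simp only [if_neg hib]
        by_cases hiw : i = w
        · simp only [if_pos hiw]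
          refine itv_erase4 hwu ?_
          by_cases h4w : (4 : Fin 10) ∈ π w ∪ π bA
          · left
            have h4w' : (4 : Fin 10) ∈ π w := by
              rcases mem_union.mp h4w with h | h
              · exact h
              · exact absurd h h4
            have hwc : w = c := owner_unique' hdisj h4w' hc
            intro h5w
            rcases mem_union.mp h5w with h | h
            · exact hcd (hwc.symm.trans (owner_unique' hdisj h hd))
            · exact h5 h
          · right; exact h4w
        · simp only [if_neg hiw]
          refine itv_erase4 (hitv i) ?_
          by_cases h4i : (4 : Fin 10) ∈ π i
          · left
            have hic : i = c := owner_unique' hdisj h4i hc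
            intro h5i
            exact hcd (hic.symm.trans (owner_unique' hdisj h5i hd))
          · right; exact h4i
    · intro i j hij
      have key : ∀ k, k ≠ bA →
          (if k = bA then ({4} : Finset (Fin 10)) else if k = w then (π w ∪ π bA).erase 4
            else (π k).erase 4) ⊆ (π w ∪ π bA).erase 4 ∪ (π k).erase 4 := by
        intro k hk
        simp only [if_neg hk]
        by_cases hkw : k = w
        · simp [hkw]
        · simp [hkw, subset_union_right]
      by_cases hib : i = bA <;> by_cases hjb : j = bA
      · exact absurd (hib.trans hjb.symm) hij
      · subst hib
        simp only [if_pos rfl, if_neg hjb]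
        rw [disjoint_left]
        intro z hz
        rw [mem_singleton.mp hz]
        by_cases hjw : j = w
        · simp [hjw]
        · simp [hjw]
      · subst hjb
        simp only [if_pos rfl, if_neg hib]
        rw [disjoint_right]
        intro z hz
        rw [mem_singleton.mp hz]
        by_cases hiw : i = w
        · simp [hiw]
        · simp [hiw]
      · simp only [if_neg hib, if_neg hjb]
        by_cases hiw : i = w <;> by_cases hjw : j = w
        · exact absurd (hiw.trans hjw.symm) hij
        · simp only [if_pos hiw, if_neg hjw]
          refine Disjoint.mono (erase_subset _ _) (erase_subset _ _) ?_
          rw [disjoint_union_left]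
          exact ⟨hdisj w j (hiw ▸ hij), hdisj bA j (fun e => hjb e.symm)⟩
        · simp only [if_pos hjw, if_neg hiw]
          refine Disjoint.mono (erase_subset _ _) (erase_subset _ _) ?_
          rw [disjoint_union_right]
          exact ⟨hdisj i w (hjw ▸ hij), hdisj i bA hib⟩
        · simp only [if_neg hiw, if_neg hjw]
          exact (hdisj i j hij).mono (erase_subset _ _) (erase_subset _ _)
    · intro v
      by_cases hv : v = 4
      · exact ⟨bA, by simp [hv]⟩
      · obtain ⟨i, hi⟩ := hcover v
        by_cases hib : i = bA
        · refine ⟨w, ?_⟩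
          simp only [if_neg hwb, if_pos rfl]
          exact mem_erase.mpr ⟨hv, mem_union_right _ (hib ▸ hi)⟩
        · by_cases hiw : i = w
          · refine ⟨w, ?_⟩
            simp only [if_neg hwb, if_pos rfl]
            exact mem_erase.mpr ⟨hv, mem_union_left _ (hiw ▸ hi)⟩
          · refine ⟨i, ?_⟩
            simp only [if_neg hib, if_neg hiw]
            exact mem_erase.mpr ⟨hv, hi⟩
  · have hBempty : π bA ∩ A bA = ∅ := by
      rw [hA2]
      apply eq_empty_of_forall_notMem
      intro x hx
      obtain ⟨hxB, hxA⟩ := mem_inter.mp hx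
      simp only [mem_insert, mem_singleton] at hxA
      rcases hxA with rfl | rfl
      · exact h4 hxB
      · exact h5 hxB
    constructor
    · intro i
      by_cases hib : i = bA
      · subst hib
        simp only [if_pos rfl]
        exact u_mono' hu (by rw [hBempty]; simp)
      · simp only [if_neg hib]
        by_cases hiw : i = w
        · subst hiw
          rw [if_pos rfl]
          refine u_mono' hu (card_le_card ?_)
          rw [erase_inter_of_not_mem' (not4Aa i hib)]
          exact inter_subset_inter subset_union_left (Finset.Subset.refl _)
        · simp only [if_neg hiw]
          exact u_mono' hu (le_of_eq (congrArg Finset.card (erase_inter_of_not_mem' (not4Aa i hib)).symm))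
    · refine ⟨bA, ?_⟩
      simp only [↓reduceIte]
      refine u_strict' hu ?_
      rw [hBempty, hA2,
        (show ({4} : Finset (Fin 10)) ∩ {4,5} = {4} by decide)]
      simp

/-- Step B EF1 violation: one a-agent owns both 4 and 5, while b has neither. -/
lemma stepB_ef1
    (hA2 : A bA = ({4,5} : Finset (Fin 10)))
    (hu : ∀ i X, u i X = ((X ∩ A i).card : ℝ))
    {c : NN} (hc4 : (4 : Fin 10) ∈ π c) (hc5 : (5 : Fin 10) ∈ π c)
    (h4 : (4 : Fin 10) ∉ π bA) (h5 : (5 : Fin 10) ∉ π bA)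
    (hEF1 : EF1 (SimpleGraph.pathGraph 10) u π) : False := by
  have hBempty : π bA ∩ A bA = ∅ := by
    rw [hA2]
    apply eq_empty_of_forall_notMem
    intro x hx
    obtain ⟨hxB, hxA⟩ := mem_inter.mp hx
    simp only [mem_insert, mem_singleton] at hxA
    rcases hxA with rfl | rfl
    · exact h4 hxB
    · exact h5 hxB
  rcases hEF1 bA c with h | ⟨v, hv, _, hval⟩
  · rw [hu, hu, hBempty] at h
    have h' : (π c ∩ A bA).card ≤ (0 : ℕ) := by exact_mod_cast h
    have hsub : ({4, 5} : Finset (Fin 10)) ⊆ π c ∩ A bA := by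
      intro x hx
      simp only [mem_insert, mem_singleton] at hx
      rcases hx with rfl | rfl
      · exact mem_inter.mpr ⟨hc4, by rw [hA2]; decide⟩
      · exact mem_inter.mpr ⟨hc5, by rw [hA2]; decide⟩
    have h2 := card_le_card hsub
    have h3 : ({4, 5} : Finset (Fin 10)).card = 2 := by decide
    omega
  · rw [hu, hu, hBempty] at hval
    have h' : ((π c).erase v ∩ A bA).card ≤ (0 : ℕ) := by exact_mod_cast hval
    have : ∃ x, x ∈ (π c).erase v ∩ A bA := by
      by_cases hv4 : v = 4
      · refine ⟨5, mem_inter.mpr ⟨mem_erase.mpr ⟨by rw [hv4]; decide, hc5⟩, by rw [hA2]; decide⟩⟩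
      · refine ⟨4, mem_inter.mpr ⟨mem_erase.mpr ⟨fun e => hv4 e.symm, hc4⟩, by rw [hA2]; decide⟩⟩
    obtain ⟨x, hx⟩ := this
    have := card_pos.mpr ⟨x, hx⟩
    omega


/-- Step C shift-left: b owns 3,4,5 but not 0: push the `≤ 3` part left. -/
lemma stepC_left
    (hA1 : ∀ t, A (Sum.inl t) = ({0,1,2,3,6,7,8,9} : Finset (Fin 10)))
    (hA2 : A bA = ({4,5} : Finset (Fin 10)))
    (hu : ∀ i X, u i X = ((X ∩ A i).card : ℝ))
    (hitv : ∀ i, Itv (π i))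
    (hdisj : ∀ i j, i ≠ j → Disjoint (π i) (π j))
    (hcover : ∀ v, ∃ i, v ∈ π i)
    (h3 : (3 : Fin 10) ∈ π bA) (h0 : (0 : Fin 10) ∉ π bA) :
    ∃ π', IsConnAlloc (SimpleGraph.pathGraph 10) π' ∧ ParetoImproves u π' π := by
  classical
  have hne : (π bA).Nonempty := ⟨3, h3⟩
  set m := (π bA).min' hne with hmdef
  have hm : m ∈ π bA := (π bA).min'_mem hne
  have hm3 : m.val ≤ 3 := by
    have := Fin.le_def.mp ((π bA).min'_le 3 h3); exact this
  have hm0 : 0 < m.val := by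
    rcases Nat.eq_zero_or_pos m.val with h | h
    · exfalso
      apply h0
      have hm0' : m = (0 : Fin 10) := Fin.ext (by simpa using h)
      exact hm0' ▸ hm
    · exact h
  set t : Fin 10 := ⟨m.val - 1, by omega⟩ with htdef
  have htval : t.val = m.val - 1 := rfl
  have ht : t ∉ π bA := by
    intro h
    have := Fin.le_def.mp ((π bA).min'_le t h)
    omega
  obtain ⟨w, hw⟩ := hcover t
  have hwb : w ≠ bA := fun e => ht (e ▸ hw)
  set Bf := (π bA).filter (· ≤ (3 : Fin 10)) with hBf
  set Bg := (π bA).filter (fun v => ¬ (v ≤ (3 : Fin 10))) with hBg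
  have hmBf : m ∈ Bf := mem_filter.mpr ⟨hm, Fin.le_def.mpr (by omega)⟩
  have h3Bf : (3 : Fin 10) ∈ Bf := mem_filter.mpr ⟨h3, le_refl _⟩
  have hBfB : Bf ⊆ π bA := filter_subset _ _
  have hBgB : Bg ⊆ π bA := filter_subset _ _
  have hAw : A w = ({0,1,2,3,6,7,8,9} : Finset (Fin 10)) := by
    rcases w with tw | ⟨⟩
    · exact hA1 tw
    · exact absurd rfl hwb
  refine ⟨fun i => if i = bA then Bg else if i = w then π w ∪ Bf else π i, ?_, ?_⟩
  · refine mk_alloc' ?_ ?_ ?_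
    · intro i
      by_cases hib : i = bA
      · simp only [if_pos hib]
        intro a ha b hb c h1 h2
        rw [mem_filter] at ha hb ⊢
        refine ⟨hitv bA a ha.1 b hb.1 c h1 h2, fun hc3 => ha.2 (le_trans h1 hc3)⟩
      · simp only [if_neg hib]
        by_cases hiw : i = w
        · simp only [if_pos hiw]
          subst hiw
          refine itv_union (hitv i) ?_ hw ?_ hmBf ?_ (by omega)
          · intro a ha b hb c h1 h2
            rw [mem_filter] at ha hb ⊢
            exact ⟨hitv bA a ha.1 b hb.1 c h1 h2, le_trans h2 hb.2⟩
          · intro z hz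
            by_contra hzt
            have h1 : ¬ z.val ≤ t.val := fun hh => hzt (Fin.le_def.mpr hh)
            have hmw : m ∈ π i := hitv i t hw z hz m (Fin.le_def.mpr (by omega))
              (Fin.le_def.mpr (by omega))
            exact disjoint_left.mp (hdisj i bA hib) hmw hm
          · intro y hy
            exact (π bA).min'_le y (hBfB hy)
        · simp only [if_neg hiw]; exact hitv i
    · intro i j hij
      by_cases hib : i = bA <;> by_cases hjb : j = bA
      · exact absurd (hib.trans hjb.symm) hij
      · subst hib
        simp only [if_pos rfl, if_neg hjb]
        by_cases hjw : j = w
        · simp only [if_pos hjw]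
          rw [disjoint_left]
          intro z hz hz'
          obtain ⟨hzB, hz3⟩ := mem_filter.mp hz
          rcases mem_union.mp hz' with h | h
          · exact disjoint_left.mp (hdisj bA w (fun e => hwb e.symm)) hzB (hjw ▸ h)
          · exact hz3 (mem_filter.mp h).2
        · simp only [if_neg hjw]
          exact (hdisj bA j (fun e => hjb e.symm)).mono hBgB (le_refl _)
      · subst hjb
        simp only [if_pos rfl, if_neg hib]
        by_cases hiw : i = w
        · simp only [if_pos hiw]
          rw [disjoint_right]
          intro z hz hz'
          obtain ⟨hzB, hz3⟩ := mem_filter.mp hz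
          rcases mem_union.mp hz' with h | h
          · exact disjoint_left.mp (hdisj bA w (fun e => hwb e.symm)) hzB (hiw ▸ h)
          · exact hz3 (mem_filter.mp h).2
        · simp only [if_neg hiw]
          exact (hdisj i bA hib).mono (le_refl _) hBgB
      · simp only [if_neg hib, if_neg hjb]
        by_cases hiw : i = w <;> by_cases hjw : j = w
        · exact absurd (hiw.trans hjw.symm) hij
        · simp only [if_pos hiw, if_neg hjw]
          rw [disjoint_union_left]
          exact ⟨hdisj w j (hiw ▸ hij), (hdisj bA j (fun e => hjb e.symm)).mono hBfB (le_refl _)⟩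
        · simp only [if_pos hjw, if_neg hiw]
          rw [disjoint_union_right]
          exact ⟨hdisj i w (hjw ▸ hij), (hdisj i bA hib).mono (le_refl _) hBfB⟩
        · simp only [if_neg hiw, if_neg hjw]
          exact hdisj i j hij
    · intro v
      obtain ⟨i, hi⟩ := hcover v
      by_cases hib : i = bA
      · by_cases hv3 : v ≤ (3 : Fin 10)
        · refine ⟨w, ?_⟩
          simp only [if_neg hwb, if_pos rfl]
          exact mem_union_right _ (mem_filter.mpr ⟨hib ▸ hi, hv3⟩)
        · refine ⟨bA, ?_⟩
          simp only [if_pos rfl]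
          exact mem_filter.mpr ⟨hib ▸ hi, hv3⟩
      · by_cases hiw : i = w
        · refine ⟨w, ?_⟩
          simp only [if_neg hwb, if_pos rfl]
          exact mem_union_left _ (hiw ▸ hi)
        · exact ⟨i, by simp only [if_neg hib, if_neg hiw]; exact hi⟩
  · constructor
    · intro i
      by_cases hib : i = bA
      · subst hib
        simp only [if_pos rfl]
        refine u_mono' hu (card_le_card ?_)
        intro x hx
        obtain ⟨hxB, hxA⟩ := mem_inter.mp hx
        refine mem_inter.mpr ⟨mem_filter.mpr ⟨hxB, ?_⟩, hxA⟩
        rw [hA2] at hxA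
        simp only [mem_insert, mem_singleton] at hxA
        rcases hxA with rfl | rfl <;> decide
      · simp only [if_neg hib]
        by_cases hiw : i = w
        · subst hiw
          simp only [if_pos rfl]
          exact u_mono' hu (card_le_card (inter_subset_inter subset_union_left (le_refl _)))
        · simp only [if_neg hiw]
          exact le_refl _
    · refine ⟨w, ?_⟩
      simp only [if_neg hwb, if_true]
      refine u_strict' hu ?_
      have hins : insert (3 : Fin 10) (π w ∩ A w) ⊆ (π w ∪ Bf) ∩ A w := by
        intro x hx
        rcases mem_insert.mp hx with rfl | hx
        · exact mem_inter.mpr ⟨mem_union_right _ h3Bf, by rw [hAw]; decide⟩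
        · exact mem_inter.mpr ⟨mem_union_left _ (mem_inter.mp hx).1, (mem_inter.mp hx).2⟩
      have h3nw : (3 : Fin 10) ∉ π w ∩ A w :=
        fun h => disjoint_left.mp (hdisj w bA hwb) (mem_inter.mp h).1 h3
      have := card_le_card hins
      rw [card_insert_of_notMem h3nw] at this
      omega

/-- Step C target: all a-agents confined to a set of ≤ 4 items. -/
lemma stepC_target
    (hA1 : ∀ t, A (Sum.inl t) = ({0,1,2,3,6,7,8,9} : Finset (Fin 10)))
    (hA2 : A bA = ({4,5} : Finset (Fin 10)))
    (hu : ∀ i X, u i X = ((X ∩ A i).card : ℝ))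
    (hdisj : ∀ i j, i ≠ j → Disjoint (π i) (π j))
    {S : Finset (Fin 10)} (hS : S.card ≤ 4)
    (hsub : ∀ t : Fin 3, π (Sum.inl t) ⊆ S) :
    ∃ π', IsConnAlloc (SimpleGraph.pathGraph 10) π' ∧ ParetoImproves u π' π := by
  classical
  obtain ⟨i₀, -, hmax⟩ := Finset.exists_max_image (univ : Finset (Fin 3))
    (fun t => (π (Sum.inl t) ∩ A (Sum.inl t)).card) ⟨0, mem_univ 0⟩
  have hmax' : ∀ t : Fin 3, (π (Sum.inl t) ∩ A (Sum.inl t)).card ≤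
      (π (Sum.inl i₀) ∩ A (Sum.inl i₀)).card := fun t => hmax t (mem_univ t)
  have hbound : ∀ t : Fin 3, t ≠ i₀ →
      (π (Sum.inl t) ∩ A (Sum.inl t)).card + (π (Sum.inl i₀) ∩ A (Sum.inl i₀)).card ≤ 4 := by
    intro t ht
    have hdis : Disjoint (π (Sum.inl t) ∩ A (Sum.inl t)) (π (Sum.inl i₀) ∩ A (Sum.inl i₀)) :=
      (hdisj _ _ (fun e => ht (Sum.inl.inj e))).mono inter_subset_left inter_subset_left
    have hsubS : (π (Sum.inl t) ∩ A (Sum.inl t)) ∪ (π (Sum.inl i₀) ∩ A (Sum.inl i₀)) ⊆ S :=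
      union_subset (Finset.Subset.trans inter_subset_left (hsub t))
        (Finset.Subset.trans inter_subset_left (hsub i₀))
    have := card_le_card hsubS
    rw [card_union_of_disjoint hdis] at this
    omega
  have hf3 : ∀ a : Fin 3, a + 1 ≠ a ∧ a + 2 ≠ a ∧ a + 2 ≠ a + 1 := by decide
  have hf3' : ∀ a b : Fin 3, b ≠ a → b ≠ a + 1 → b = a + 2 := by decide
  set π' : NN → Finset (Fin 10) := fun i => match i with
    | Sum.inr _ => ({4,5} : Finset (Fin 10))
    | Sum.inl t => if t = i₀ then {6,7,8,9} else if t = i₀ + 1 then {0,1} else {2,3}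
    with hπ'
  have hπ'b : π' bA = ({4,5} : Finset (Fin 10)) := rfl
  have hπ'0 : π' (Sum.inl i₀) = ({6,7,8,9} : Finset (Fin 10)) := by
    show (if i₀ = i₀ then ({6,7,8,9} : Finset (Fin 10)) else if i₀ = i₀ + 1 then {0,1} else {2,3}) = _
    rw [if_pos rfl]
  have hπ'1 : π' (Sum.inl (i₀+1)) = ({0,1} : Finset (Fin 10)) := by
    show (if i₀ + 1 = i₀ then ({6,7,8,9} : Finset (Fin 10)) else if i₀ + 1 = i₀ + 1 then {0,1} else {2,3}) = _
    rw [if_neg (hf3 i₀).1, if_pos rfl]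
  have hπ'2 : π' (Sum.inl (i₀+2)) = ({2,3} : Finset (Fin 10)) := by
    show (if i₀ + 2 = i₀ then ({6,7,8,9} : Finset (Fin 10)) else if i₀ + 2 = i₀ + 1 then {0,1} else {2,3}) = _
    rw [if_neg (hf3 i₀).2.1, if_neg (hf3 i₀).2.2]
  have hcases : ∀ t : Fin 3, t = i₀ ∨ t = i₀ + 1 ∨ t = i₀ + 2 := by
    intro t
    by_cases h1 : t = i₀
    · exact Or.inl h1
    by_cases h2 : t = i₀ + 1
    · exact Or.inr (Or.inl h2)
    · exact Or.inr (Or.inr (hf3' i₀ t h1 h2))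
  refine ⟨π', ?_, ?_⟩
  · refine mk_alloc' ?_ ?_ ?_
    · intro i
      rcases i with t | v
      · rcases hcases t with h | h | h <;> rw [h]
        · rw [hπ'0]; unfold Itv; decide
        · rw [hπ'1]; unfold Itv; decide
        · rw [hπ'2]; unfold Itv; decide
      · cases v; rw [hπ'b]; unfold Itv; decide
    · intro i j hij
      rcases i with s | v <;> rcases j with s' | v'
      · rcases hcases s with h | h | h <;> rcases hcases s' with h' | h' | h' <;>
          rw [h] at hij ⊢ <;> rw [h'] at hij ⊢ <;>
          first
            | exact absurd rfl hij
            | (rw [hπ'0, hπ'1]; decide)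
            | (rw [hπ'0, hπ'2]; decide)
            | (rw [hπ'1, hπ'0]; decide)
            | (rw [hπ'1, hπ'2]; decide)
            | (rw [hπ'2, hπ'0]; decide)
            | (rw [hπ'2, hπ'1]; decide)
      · cases v'
        rcases hcases s with h | h | h <;> rw [h] <;>
          [rw [hπ'0, hπ'b]; rw [hπ'1, hπ'b]; rw [hπ'2, hπ'b]] <;> decide
      · cases v
        rcases hcases s' with h | h | h <;> rw [h] <;>
          [rw [hπ'b, hπ'0]; rw [hπ'b, hπ'1]; rw [hπ'b, hπ'2]] <;> decide
      · cases v; cases v'; exact absurd rfl hij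
    · intro v
      have : v ∈ ({6,7,8,9} : Finset (Fin 10)) ∨ v ∈ ({0,1} : Finset (Fin 10)) ∨
          v ∈ ({2,3} : Finset (Fin 10)) ∨ v ∈ ({4,5} : Finset (Fin 10)) := by
        revert v; decide
      rcases this with h | h | h | h
      · exact ⟨Sum.inl i₀, hπ'0 ▸ h⟩
      · exact ⟨Sum.inl (i₀+1), hπ'1 ▸ h⟩
      · exact ⟨Sum.inl (i₀+2), hπ'2 ▸ h⟩
      · exact ⟨bA, hπ'b ▸ h⟩
  · have hSbound : ∀ t : Fin 3, (π (Sum.inl t) ∩ A (Sum.inl t)).card ≤ S.card :=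
      fun t => card_le_card (Finset.Subset.trans inter_subset_left (hsub t))
    have hc0 : (({6,7,8,9} : Finset (Fin 10)) ∩ A (Sum.inl i₀)).card = 4 := by
      rw [hA1]; decide
    have hc1 : (({0,1} : Finset (Fin 10)) ∩ A (Sum.inl (i₀+1))).card = 2 := by
      rw [hA1]; decide
    have hc2 : (({2,3} : Finset (Fin 10)) ∩ A (Sum.inl (i₀+2))).card = 2 := by
      rw [hA1]; decide
    constructor
    · intro i
      rcases i with t | v
      · rcases hcases t with h | h | h <;> rw [h]
        · rw [hπ'0]
          refine u_mono' hu ?_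
          have h1 := hSbound i₀
          omega
        · rw [hπ'1]
          refine u_mono' hu ?_
          have h1 := hbound (i₀+1) (hf3 i₀).1
          have h2 := hmax' (i₀+1)
          omega
        · rw [hπ'2]
          refine u_mono' hu ?_
          have h1 := hbound (i₀+2) (hf3 i₀).2.1
          have h2 := hmax' (i₀+2)
          omega
      · cases v
        show u bA (π bA) ≤ u bA (π' bA)
        rw [hπ'b]
        refine u_mono' hu ?_
        rw [hA2]
        have h1 : π bA ∩ ({4,5} : Finset (Fin 10)) ⊆ ({4,5} : Finset (Fin 10)) :=
          inter_subset_right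
        have h2 := card_le_card h1
        have h3 : (({4,5} : Finset (Fin 10)) ∩ ({4,5} : Finset (Fin 10))).card = 2 := by decide
        have h4 : (({4,5} : Finset (Fin 10))).card = 2 := by decide
        omega
    · by_cases hstrict : (π (Sum.inl i₀) ∩ A (Sum.inl i₀)).card ≤ 3
      · refine ⟨Sum.inl i₀, ?_⟩
        rw [hπ'0]
        refine u_strict' hu ?_
        omega
      · refine ⟨Sum.inl (i₀+1), ?_⟩
        rw [hπ'1]
        refine u_strict' hu ?_
        have h1 := hbound (i₀+1) (hf3 i₀).1
        have h2 := hmax' (i₀+1)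
        omega


/-- Step C shift-right: b owns 4,5,6 but not 9: push the `≥ 6` part right. -/
lemma stepC_right
    (hA1 : ∀ t, A (Sum.inl t) = ({0,1,2,3,6,7,8,9} : Finset (Fin 10)))
    (hA2 : A bA = ({4,5} : Finset (Fin 10)))
    (hu : ∀ i X, u i X = ((X ∩ A i).card : ℝ))
    (hitv : ∀ i, Itv (π i))
    (hdisj : ∀ i j, i ≠ j → Disjoint (π i) (π j))
    (hcover : ∀ v, ∃ i, v ∈ π i)
    (h6 : (6 : Fin 10) ∈ π bA) (h9 : (9 : Fin 10) ∉ π bA) :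
    ∃ π', IsConnAlloc (SimpleGraph.pathGraph 10) π' ∧ ParetoImproves u π' π := by
  classical
  have hne : (π bA).Nonempty := ⟨6, h6⟩
  set M := (π bA).max' hne with hMdef
  have hM : M ∈ π bA := (π bA).max'_mem hne
  have hM6 : 6 ≤ M.val := Fin.le_def.mp ((π bA).le_max' 6 h6)
  have hM9 : M.val < 9 := by
    rcases Nat.lt_or_ge M.val 9 with h | h
    · exact h
    · exfalso
      apply h9
      have : M = (9 : Fin 10) := Fin.ext (by omega)
      exact this ▸ hM
  set t : Fin 10 := ⟨M.val + 1, by omega⟩ with htdef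
  have htval : t.val = M.val + 1 := rfl
  have ht : t ∉ π bA := by
    intro h
    have := Fin.le_def.mp ((π bA).le_max' t h)
    omega
  obtain ⟨w, hw⟩ := hcover t
  have hwb : w ≠ bA := fun e => ht (e ▸ hw)
  set Bf := (π bA).filter (fun v => ¬ (v ≤ (5 : Fin 10))) with hBf
  set Bg := (π bA).filter (· ≤ (5 : Fin 10)) with hBg
  have hMBf : M ∈ Bf := mem_filter.mpr ⟨hM, fun hh => by
    have := Fin.le_def.mp hh; omega⟩
  have h6Bf : (6 : Fin 10) ∈ Bf := mem_filter.mpr ⟨h6, by decide⟩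
  have hBfB : Bf ⊆ π bA := filter_subset _ _
  have hBgB : Bg ⊆ π bA := filter_subset _ _
  have hAw : A w = ({0,1,2,3,6,7,8,9} : Finset (Fin 10)) := by
    rcases w with tw | ⟨⟩
    · exact hA1 tw
    · exact absurd rfl hwb
  refine ⟨fun i => if i = bA then Bg else if i = w then Bf ∪ π w else π i, ?_, ?_⟩
  · refine mk_alloc' ?_ ?_ ?_
    · intro i
      by_cases hib : i = bA
      · simp only [if_pos hib]
        intro a ha b hb c h1 h2
        rw [mem_filter] at ha hb ⊢
        exact ⟨hitv bA a ha.1 b hb.1 c h1 h2, le_trans h2 hb.2⟩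
      · simp only [if_neg hib]
        by_cases hiw : i = w
        · simp only [if_pos hiw]
          subst hiw
          refine itv_union ?_ (hitv i) hMBf ?_ hw ?_ rfl
          · intro a ha b hb c h1 h2
            rw [mem_filter] at ha hb ⊢
            refine ⟨hitv bA a ha.1 b hb.1 c h1 h2, fun hc5 => ha.2 (le_trans h1 hc5)⟩
          · intro z hz
            exact (π bA).le_max' z (hBfB hz)
          · intro z hz
            by_contra hzt
            have h1 : ¬ t.val ≤ z.val := fun hh => hzt (Fin.le_def.mpr hh)
            have hMw : M ∈ π i := hitv i z hz t hw M (Fin.le_def.mpr (by omega))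
              (Fin.le_def.mpr (by omega))
            exact disjoint_left.mp (hdisj i bA hib) hMw hM
        · simp only [if_neg hiw]
          exact hitv i
    · intro i j hij
      by_cases hib : i = bA <;> by_cases hjb : j = bA
      · exact absurd (hib.trans hjb.symm) hij
      · subst hib
        simp only [if_pos rfl, if_neg hjb]
        by_cases hjw : j = w
        · simp only [if_pos hjw]
          rw [disjoint_left]
          intro z hz hz'
          obtain ⟨hzB, hz5⟩ := mem_filter.mp hz
          rcases mem_union.mp hz' with h | h
          · exact (mem_filter.mp h).2 hz5
          · exact disjoint_left.mp (hdisj bA w (fun e => hwb e.symm)) hzB (hjw ▸ h)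
        · simp only [if_neg hjw]
          exact (hdisj bA j (fun e => hjb e.symm)).mono hBgB (le_refl _)
      · subst hjb
        simp only [if_pos rfl, if_neg hib]
        by_cases hiw : i = w
        · simp only [if_pos hiw]
          rw [disjoint_right]
          intro z hz hz'
          obtain ⟨hzB, hz5⟩ := mem_filter.mp hz
          rcases mem_union.mp hz' with h | h
          · exact (mem_filter.mp h).2 hz5
          · exact disjoint_left.mp (hdisj bA w (fun e => hwb e.symm)) hzB (hiw ▸ h)
        · simp only [if_neg hiw]
          exact (hdisj i bA hib).mono (le_refl _) hBgB
      · simp only [if_neg hib, if_neg hjb]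
        by_cases hiw : i = w <;> by_cases hjw : j = w
        · exact absurd (hiw.trans hjw.symm) hij
        · simp only [if_pos hiw, if_neg hjw]
          rw [disjoint_union_left]
          exact ⟨(hdisj bA j (fun e => hjb e.symm)).mono hBfB (le_refl _), hdisj w j (hiw ▸ hij)⟩
        · simp only [if_pos hjw, if_neg hiw]
          rw [disjoint_union_right]
          exact ⟨(hdisj i bA hib).mono (le_refl _) hBfB, hdisj i w (hjw ▸ hij)⟩
        · simp only [if_neg hiw, if_neg hjw]
          exact hdisj i j hij
    · intro v
      obtain ⟨i, hi⟩ := hcover v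
      by_cases hib : i = bA
      · by_cases hv5 : v ≤ (5 : Fin 10)
        · refine ⟨bA, ?_⟩
          simp only [if_pos rfl]
          exact mem_filter.mpr ⟨hib ▸ hi, hv5⟩
        · refine ⟨w, ?_⟩
          simp only [if_neg hwb, if_pos rfl]
          exact mem_union_left _ (mem_filter.mpr ⟨hib ▸ hi, hv5⟩)
      · by_cases hiw : i = w
        · refine ⟨w, ?_⟩
          simp only [if_neg hwb, if_pos rfl]
          exact mem_union_right _ (hiw ▸ hi)
        · exact ⟨i, by simp only [if_neg hib, if_neg hiw]; exact hi⟩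
  · constructor
    · intro i
      by_cases hib : i = bA
      · subst hib
        simp only [if_pos rfl]
        refine u_mono' hu (card_le_card ?_)
        intro x hx
        obtain ⟨hxB, hxA⟩ := mem_inter.mp hx
        refine mem_inter.mpr ⟨mem_filter.mpr ⟨hxB, ?_⟩, hxA⟩
        rw [hA2] at hxA
        simp only [mem_insert, mem_singleton] at hxA
        rcases hxA with rfl | rfl <;> decide
      · simp only [if_neg hib]
        by_cases hiw : i = w
        · subst hiw
          simp only [if_pos rfl, if_true]
          exact u_mono' hu (card_le_card (inter_subset_inter subset_union_right (le_refl _)))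
        · simp only [if_neg hiw]
          exact le_refl _
    · refine ⟨w, ?_⟩
      simp only [if_neg hwb, if_true]
      refine u_strict' hu ?_
      have hins : insert (6 : Fin 10) (π w ∩ A w) ⊆ (Bf ∪ π w) ∩ A w := by
        intro x hx
        rcases mem_insert.mp hx with rfl | hx
        · exact mem_inter.mpr ⟨mem_union_left _ h6Bf, by rw [hAw]; decide⟩
        · exact mem_inter.mpr ⟨mem_union_right _ (mem_inter.mp hx).1, (mem_inter.mp hx).2⟩
      have h6nw : (6 : Fin 10) ∉ π w ∩ A w :=
        fun h => disjoint_left.mp (hdisj w bA hwb) (mem_inter.mp h).1 h6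
      have := card_le_card hins
      rw [card_insert_of_notMem h6nw] at this
      omega

/-- Step D: b owns exactly {4,5}; EF1 fails among the a-agents. -/
lemma stepD
    (hA1 : ∀ t, A (Sum.inl t) = ({0,1,2,3,6,7,8,9} : Finset (Fin 10)))
    (hA2 : A bA = ({4,5} : Finset (Fin 10)))
    (hu : ∀ i X, u i X = ((X ∩ A i).card : ℝ))
    (hitv : ∀ i, Itv (π i))
    (hdisj : ∀ i j, i ≠ j → Disjoint (π i) (π j))
    (hcover : ∀ v, ∃ i, v ∈ π i)
    (h4 : (4 : Fin 10) ∈ π bA) (h5 : (5 : Fin 10) ∈ π bA)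
    (h3 : (3 : Fin 10) ∉ π bA) (h6 : (6 : Fin 10) ∉ π bA)
    (hEF1 : EF1 (SimpleGraph.pathGraph 10) u π) : False := by
  have hf3ne : ∀ a : Fin 3, a + 1 ≠ a ∧ a + 2 ≠ a ∧ a + 2 ≠ a + 1 := by decide
  -- main engine
  have main : ∀ (tj : Fin 3) (P Q : Finset (Fin 10)), P ⊆ π (Sum.inl tj) →
      (∀ t : Fin 3, P ⊆ A (Sum.inl t)) →
      (∀ t : Fin 3, t ≠ tj → π (Sum.inl t) ∩ A (Sum.inl t) ⊆ Q) →
      Q.card ≤ 4 → P.card = 4 → (∀ v : Fin 10, 3 ≤ (P.erase v).card) → False := by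
    intro tj P Q hPj hPA hQ hQc hPc hPe
    have hsum : (π (Sum.inl (tj+1)) ∩ A (Sum.inl (tj+1))).card +
        (π (Sum.inl (tj+2)) ∩ A (Sum.inl (tj+2))).card ≤ 4 := by
      have hdis : Disjoint (π (Sum.inl (tj+1)) ∩ A (Sum.inl (tj+1)))
          (π (Sum.inl (tj+2)) ∩ A (Sum.inl (tj+2))) :=
        (hdisj _ _ (fun e => (hf3ne tj).2.2 (Sum.inl.inj e).symm)).mono
          inter_subset_left inter_subset_left
      have hsubQ : (π (Sum.inl (tj+1)) ∩ A (Sum.inl (tj+1))) ∪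
          (π (Sum.inl (tj+2)) ∩ A (Sum.inl (tj+2))) ⊆ Q :=
        union_subset (hQ _ (hf3ne tj).1) (hQ _ (hf3ne tj).2.1)
      have := card_le_card hsubQ
      rw [card_union_of_disjoint hdis] at this
      omega
    -- pick the poorer of the two other agents
    have hpick : ∃ s : Fin 3, s ≠ tj ∧ (π (Sum.inl s) ∩ A (Sum.inl s)).card ≤ 2 := by
      by_cases h : (π (Sum.inl (tj+1)) ∩ A (Sum.inl (tj+1))).card ≤ 2
      · exact ⟨tj+1, (hf3ne tj).1, h⟩
      · exact ⟨tj+2, (hf3ne tj).2.1, by omega⟩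
    obtain ⟨s, hs, hs2⟩ := hpick
    rcases hEF1 (Sum.inl s) (Sum.inl tj) with h | ⟨v, hv, _, hval⟩
    · rw [hu, hu] at h
      have h' : (π (Sum.inl tj) ∩ A (Sum.inl s)).card ≤
          (π (Sum.inl s) ∩ A (Sum.inl s)).card := by exact_mod_cast h
      have hsubP : P ⊆ π (Sum.inl tj) ∩ A (Sum.inl s) :=
        fun x hx => mem_inter.mpr ⟨hPj hx, hPA s hx⟩
      have := card_le_card hsubP
      omega
    · rw [hu, hu] at hval
      have h' : ((π (Sum.inl tj)).erase v ∩ A (Sum.inl s)).card ≤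
          (π (Sum.inl s) ∩ A (Sum.inl s)).card := by exact_mod_cast hval
      have hsubP : P.erase v ⊆ (π (Sum.inl tj)).erase v ∩ A (Sum.inl s) := by
        intro x hx
        obtain ⟨hxv, hxP⟩ := mem_erase.mp hx
        exact mem_inter.mpr ⟨mem_erase.mpr ⟨hxv, hPj hxP⟩, hPA s hxP⟩
      have h2 := card_le_card hsubP
      have h3 := hPe v
      omega
  -- owners of 0,3,6,9
  have h0 : (0 : Fin 10) ∉ π bA := fun h => h3 (hitv bA 0 h 4 h4 3 (by decide) (by decide))
  have h9 : (9 : Fin 10) ∉ π bA := fun h => h6 (hitv bA 5 h5 9 h 6 (by decide) (by decide))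
  obtain ⟨o0, ho0⟩ := hcover 0
  obtain ⟨o3, ho3⟩ := hcover 3
  obtain ⟨o6, ho6⟩ := hcover 6
  obtain ⟨o9, ho9⟩ := hcover 9
  have ho0b : o0 ≠ bA := fun e => h0 (e ▸ ho0)
  have ho3b : o3 ≠ bA := fun e => h3 (e ▸ ho3)
  have ho6b : o6 ≠ bA := fun e => h6 (e ▸ ho6)
  have ho9b : o9 ≠ bA := fun e => h9 (e ▸ ho9)
  obtain ⟨t0, rfl⟩ : ∃ t, o0 = Sum.inl t := by
    rcases o0 with t | v
    · exact ⟨t, rfl⟩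
    · exact absurd rfl ho0b
  obtain ⟨t3, rfl⟩ : ∃ t, o3 = Sum.inl t := by
    rcases o3 with t | v
    · exact ⟨t, rfl⟩
    · exact absurd rfl ho3b
  obtain ⟨t6, rfl⟩ : ∃ t, o6 = Sum.inl t := by
    rcases o6 with t | v
    · exact ⟨t, rfl⟩
    · exact absurd rfl ho6b
  obtain ⟨t9, rfl⟩ : ∃ t, o9 = Sum.inl t := by
    rcases o9 with t | v
    · exact ⟨t, rfl⟩
    · exact absurd rfl ho9b
  have hQimp1 : ∀ x : Fin 10, x ∈ ({0,1,2,3,6,7,8,9} : Finset (Fin 10)) →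
      x ∉ ({0,1,2,3} : Finset (Fin 10)) → x ∈ ({6,7,8,9} : Finset (Fin 10)) := by decide
  have hQimp2 : ∀ x : Fin 10, x ∈ ({0,1,2,3,6,7,8,9} : Finset (Fin 10)) →
      x ∉ ({6,7,8,9} : Finset (Fin 10)) → x ∈ ({0,1,2,3} : Finset (Fin 10)) := by decide
  by_cases hc1 : t0 = t3
  · -- π (inl t0) ⊇ {0,1,2,3}
    subst hc1
    have hP : ({0,1,2,3} : Finset (Fin 10)) ⊆ π (Sum.inl t0) := by
      intro x hx
      simp only [mem_insert, mem_singleton] at hx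
      rcases hx with rfl | rfl | rfl | rfl
      · exact ho0
      · exact hitv _ 0 ho0 3 ho3 1 (by decide) (by decide)
      · exact hitv _ 0 ho0 3 ho3 2 (by decide) (by decide)
      · exact ho3
    refine main t0 {0,1,2,3} {6,7,8,9} hP (fun t => by rw [hA1]; decide) ?_ (by decide)
      (by decide) (by decide)
    intro t ht x hx
    obtain ⟨hxπ, hxA⟩ := mem_inter.mp hx
    rw [hA1] at hxA
    refine hQimp1 x hxA ?_
    intro hxP
    exact (fun e => ht (Sum.inl.inj e))
      (owner_unique' hdisj hxπ (hP hxP)) |>.elim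
  · by_cases hc2 : t6 = t9
    · subst hc2
      have hP : ({6,7,8,9} : Finset (Fin 10)) ⊆ π (Sum.inl t6) := by
        intro x hx
        simp only [mem_insert, mem_singleton] at hx
        rcases hx with rfl | rfl | rfl | rfl
        · exact ho6
        · exact hitv _ 6 ho6 9 ho9 7 (by decide) (by decide)
        · exact hitv _ 6 ho6 9 ho9 8 (by decide) (by decide)
        · exact ho9
      refine main t6 {6,7,8,9} {0,1,2,3} hP (fun t => by rw [hA1]; decide) ?_ (by decide)
        (by decide) (by decide)
      intro t ht x hx
      obtain ⟨hxπ, hxA⟩ := mem_inter.mp hx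
      rw [hA1] at hxA
      refine hQimp2 x hxA ?_
      intro hxP
      exact (fun e => ht (Sum.inl.inj e))
        (owner_unique' hdisj hxπ (hP hxP)) |>.elim
    · -- four pairwise distinct elements of Fin 3: contradiction
      have d06 : t0 ≠ t6 := by
        intro e
        apply disjoint_left.mp (hdisj (Sum.inl t0) bA ho0b) _ h4
        exact hitv _ 0 ho0 6 (e ▸ ho6) 4 (by decide) (by decide)
      have d09 : t0 ≠ t9 := by
        intro e
        apply disjoint_left.mp (hdisj (Sum.inl t0) bA ho0b) _ h4
        exact hitv _ 0 ho0 9 (e ▸ ho9) 4 (by decide) (by decide)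
      have d36 : t3 ≠ t6 := by
        intro e
        apply disjoint_left.mp (hdisj (Sum.inl t3) bA ho3b) _ h4
        exact hitv _ 3 ho3 6 (e ▸ ho6) 4 (by decide) (by decide)
      have d39 : t3 ≠ t9 := by
        intro e
        apply disjoint_left.mp (hdisj (Sum.inl t3) bA ho3b) _ h4
        exact hitv _ 3 ho3 9 (e ▸ ho9) 4 (by decide) (by decide)
      have : ∀ a b c d : Fin 3, a = b ∨ c = d ∨ a = c ∨ a = d ∨ b = c ∨ b = d := by decide
      rcases this t0 t3 t6 t9 with h | h | h | h | h | h
      · exact hc1 h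
      · exact hc2 h
      · exact d06 h
      · exact d09 h
      · exact d36 h
      · exact d39 h


end main

theorem stmt8
    (A : (Fin 3 ⊕ Unit) → Finset (Fin 10))
    (hA1 : ∀ t, A (Sum.inl t) = ({0, 1, 2, 3, 6, 7, 8, 9} : Finset (Fin 10)))
    (hA2 : A (Sum.inr ()) = ({4, 5} : Finset (Fin 10)))
    (u : (Fin 3 ⊕ Unit) → Finset (Fin 10) → ℝ)
    (hu : ∀ i X, u i X = ((X ∩ A i).card : ℝ))
    (π : (Fin 3 ⊕ Unit) → Finset (Fin 10))
    (hπ : IsConnAlloc (SimpleGraph.pathGraph 10) π) :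
    ¬ (ParetoOptimal (SimpleGraph.pathGraph 10) u π ∧
       EF1 (SimpleGraph.pathGraph 10) u π) := by

  rintro ⟨hPO, hEF1⟩
  obtain ⟨hsubR, hconn, hdisj, hcover'⟩ := hπ
  have hitv : ∀ i, Itv (π i) := fun i => connSet_itv (hconn i)
  have hcover : ∀ v : Fin 10, ∃ i, v ∈ π i := fun v => hcover' v (mem_univ v)
  have hA2' : A bA = ({4,5} : Finset (Fin 10)) := hA2
  by_cases h4 : (4 : Fin 10) ∈ π bA <;> by_cases h5 : (5 : Fin 10) ∈ π bA
  · -- b owns 4 and 5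
    by_cases h3 : (3 : Fin 10) ∈ π bA
    · by_cases h0 : (0 : Fin 10) ∈ π bA
      · -- B ⊇ [0..5]; all a-agents confined to {6,7,8,9}
        have hkey : ∀ x : Fin 10, x ∉ ({6,7,8,9} : Finset (Fin 10)) → x.val ≤ 5 := by decide
        have hsubS : ∀ t : Fin 3, π (Sum.inl t) ⊆ ({6,7,8,9} : Finset (Fin 10)) := by
          intro t x hx
          by_contra hxS
          have hxB : x ∈ π bA := hitv bA 0 h0 5 h5 x (Fin.le_def.mpr (by omega))
            (Fin.le_def.mpr (hkey x hxS))
          exact disjoint_left.mp (hdisj (Sum.inl t) bA Sum.inl_ne_inr) hx hxB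
        obtain ⟨π', hc1, hc2⟩ := stepC_target hA1 hA2' hu hdisj (by decide) hsubS
        exact hPO π' hc1 hc2
      · obtain ⟨π', hc1, hc2⟩ := stepC_left hA1 hA2' hu hitv hdisj hcover h3 h0
        exact hPO π' hc1 hc2
    · by_cases h6 : (6 : Fin 10) ∈ π bA
      · by_cases h9 : (9 : Fin 10) ∈ π bA
        · -- B ⊇ [4..9]; all a-agents confined to {0,1,2,3}
          have hkey : ∀ x : Fin 10, x ∉ ({0,1,2,3} : Finset (Fin 10)) → 4 ≤ x.val := by decide
          have hsubS : ∀ t : Fin 3, π (Sum.inl t) ⊆ ({0,1,2,3} : Finset (Fin 10)) := by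
            intro t x hx
            by_contra hxS
            have hxB : x ∈ π bA := hitv bA 4 h4 9 h9 x (Fin.le_def.mpr (hkey x hxS))
              (Fin.le_def.mpr (by omega))
            exact disjoint_left.mp (hdisj (Sum.inl t) bA Sum.inl_ne_inr) hx hxB
          obtain ⟨π', hc1, hc2⟩ := stepC_target hA1 hA2' hu hdisj (by decide) hsubS
          exact hPO π' hc1 hc2
        · obtain ⟨π', hc1, hc2⟩ := stepC_right hA1 hA2' hu hitv hdisj hcover h6 h9
          exact hPO π' hc1 hc2
      · exact stepD hA1 hA2' hu hitv hdisj hcover h4 h5 h3 h6 hEF1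
  · -- b owns 4 but not 5: move 5 over
    obtain ⟨π', hc1, hc2⟩ := stepA hA1 hA2' hu hitv hdisj hcover
      (x := 4) (y := 5) (by decide) (by decide) (Or.inl (by decide)) h4 h5
    exact hPO π' hc1 hc2
  · -- b owns 5 but not 4: move 4 over
    obtain ⟨π', hc1, hc2⟩ := stepA hA1 hA2' hu hitv hdisj hcover
      (x := 5) (y := 4) (by decide) (by decide) (Or.inr (by decide)) h5 h4
    exact hPO π' hc1 hc2
  · -- b owns neither 4 nor 5
    obtain ⟨c, hc⟩ := hcover 4
    obtain ⟨d, hd⟩ := hcover 5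
    by_cases hcd : c = d
    · exact stepB_ef1 hA2' hu hc (hcd ▸ hd) h4 h5 hEF1
    · obtain ⟨π', hc1, hc2⟩ := stepB hA1 hA2' hu hitv hdisj hcover hc hd hcd h4 h5
      exact hPO π' hc1 hc2
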